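/- Let n ≥ 5 be an integer and T ∈ ℝ. Then the function v(t) = (cosh(t+T))^((4−n)/2) is positive and solves the Delaunay ODE: v⁗(t) − ((n(n−4)+8)/2)·v″(t) + (n²(n−4)²/16)·v(t) − (n(n−4)(n²−4)/16)·v(t)^((n+4)/(n−4)) = 0 for all t ∈ ℝ. -/

import Mathlib

open Real


private lemma hasDerivAt_coshE (T b e t : ℝ) :
    HasDerivAt (fun u => b * Real.cosh (u + T) ^ e)
      ((b * e) * Real.cosh (t + T) ^ (e - 1) * Real.sinh (t + T)) t := by
  have h0 : HasDerivAt (fun u : ℝ => u + T) 1 t := (hasDerivAt_id t).add_const T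
  have hc : HasDerivAt (fun u => Real.cosh (u + T)) (Real.sinh (t + T)) t := by
    have h1 := (Real.hasDerivAt_cosh (t + T)).comp t h0; rw [mul_one] at h1; exact h1
  have h := (hc.rpow_const (p := e) (Or.inl (Real.cosh_pos (x := t + T)).ne')).const_mul b
  refine h.congr_deriv (Eq.symm ?_)
  ring

private lemma hasDerivAt_coshO (T b e t : ℝ) :
    HasDerivAt (fun u => (b * Real.cosh (u + T) ^ e) * Real.sinh (u + T))
      ((b * (e + 1)) * Real.cosh (t + T) ^ (e + 1) +
        (-(b * e)) * Real.cosh (t + T) ^ (e - 1)) t := by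
  have h0 : HasDerivAt (fun u : ℝ => u + T) 1 t := (hasDerivAt_id t).add_const T
  have hs : HasDerivAt (fun u => Real.sinh (u + T)) (Real.cosh (t + T)) t := by
    have h1 := (Real.hasDerivAt_sinh (t + T)).comp t h0; rw [mul_one] at h1; exact h1
  have h := (hasDerivAt_coshE T b e t).mul hs
  refine h.congr_deriv (Eq.symm ?_)
  have hcpos := Real.cosh_pos (x := t + T)
  set c := Real.cosh (t + T)
  set s := Real.sinh (t + T)
  have hss : s * s = c * c - 1 := by
    have := Real.cosh_sq (t + T); nlinarith
  have hrw1 : c ^ (e - 1) * c = c ^ e := by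
    rw [← Real.rpow_add_one hcpos.ne', sub_add_cancel]
  have hrw2 : c ^ e * c = c ^ (e + 1) := (Real.rpow_add_one hcpos.ne' e).symm
  calc (b * (e + 1)) * c ^ (e + 1) + (-(b * e)) * c ^ (e - 1)
      = b * e * (c ^ e * c) + b * (c ^ e * c) - b * e * c ^ (e - 1) := by rw [hrw2]; ring
    _ = b * e * ((c ^ (e-1) * c) * c) + b * (c ^ e * c) - b * e * c ^ (e - 1) := by rw [hrw1]
    _ = b * e * c ^ (e - 1) * (c * c - 1) + b * c ^ e * c := by ring
    _ = b * e * c ^ (e - 1) * s * s + b * c ^ e * c := by rw [← hss]; ring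

private lemma deriv_E (T b e : ℝ) :
    deriv (fun u => b * Real.cosh (u + T) ^ e) =
      fun t => (b * e) * Real.cosh (t + T) ^ (e - 1) * Real.sinh (t + T) :=
  funext fun t => (hasDerivAt_coshE T b e t).deriv

private lemma deriv_O (T b e : ℝ) :
    deriv (fun u => (b * Real.cosh (u + T) ^ e) * Real.sinh (u + T)) =
      fun t => (b * (e + 1)) * Real.cosh (t + T) ^ (e + 1) +
        (-(b * e)) * Real.cosh (t + T) ^ (e - 1) :=
  funext fun t => (hasDerivAt_coshO T b e t).deriv

private lemma deriv_OO (T b1 e1 b2 e2 : ℝ) :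
    deriv (fun u => (b1 * Real.cosh (u + T) ^ e1) * Real.sinh (u + T)
        + (b2 * Real.cosh (u + T) ^ e2) * Real.sinh (u + T)) =
      fun t => ((b1 * (e1 + 1)) * Real.cosh (t + T) ^ (e1 + 1) +
        (-(b1 * e1)) * Real.cosh (t + T) ^ (e1 - 1)) +
        ((b2 * (e2 + 1)) * Real.cosh (t + T) ^ (e2 + 1) +
        (-(b2 * e2)) * Real.cosh (t + T) ^ (e2 - 1)) :=
  funext fun t => ((hasDerivAt_coshO T b1 e1 t).add (hasDerivAt_coshO T b2 e2 t)).deriv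

private lemma deriv_EE (T b1 e1 b2 e2 : ℝ) :
    deriv (fun u => b1 * Real.cosh (u + T) ^ e1 + b2 * Real.cosh (u + T) ^ e2) =
      fun t => (b1 * e1) * Real.cosh (t + T) ^ (e1 - 1) * Real.sinh (t + T)
        + (b2 * e2) * Real.cosh (t + T) ^ (e2 - 1) * Real.sinh (t + T) :=
  funext fun t => ((hasDerivAt_coshE T b1 e1 t).add (hasDerivAt_coshE T b2 e2 t)).deriv

private lemma iteratedDeriv_cosh_rpow (a T : ℝ) :
    (iteratedDeriv 2 (fun t => Real.cosh (t + T) ^ a) =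
       fun t => a ^ 2 * Real.cosh (t + T) ^ a - a * (a - 1) * Real.cosh (t + T) ^ (a - 2)) ∧
    (iteratedDeriv 4 (fun t => Real.cosh (t + T) ^ a) =
       fun t => a ^ 4 * Real.cosh (t + T) ^ a
         - a * (a - 1) * (a ^ 2 + (a - 2) ^ 2) * Real.cosh (t + T) ^ (a - 2)
         + a * (a - 1) * (a - 2) * (a - 3) * Real.cosh (t + T) ^ (a - 4)) := by
  have hv : (fun t : ℝ => Real.cosh (t + T) ^ a) = fun t => 1 * Real.cosh (t + T) ^ a := by
    funext t; rw [one_mul]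
  have h1 : deriv (fun t : ℝ => Real.cosh (t + T) ^ a) =
      fun t => (a * Real.cosh (t + T) ^ (a - 1)) * Real.sinh (t + T) := by
    rw [hv, deriv_E]; funext t; ring
  have h2 : iteratedDeriv 2 (fun t : ℝ => Real.cosh (t + T) ^ a) =
      fun t => a ^ 2 * Real.cosh (t + T) ^ a - a * (a - 1) * Real.cosh (t + T) ^ (a - 2) := by
    rw [show (2 : ℕ) = 1 + 1 from rfl, iteratedDeriv_succ, iteratedDeriv_one, h1]
    rw [show (fun t => a * Real.cosh (t + T) ^ (a - 1) * Real.sinh (t + T))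
        = fun t => (a * Real.cosh (t + T) ^ (a - 1)) * Real.sinh (t + T) from rfl,
      deriv_O]
    funext t
    rw [show a - 1 + 1 = a from by ring, show a - 1 - 1 = a - 2 from by ring]
    ring
  refine ⟨h2, ?_⟩
  have h3 : iteratedDeriv 3 (fun t : ℝ => Real.cosh (t + T) ^ a) =
      fun t => ((a ^ 2 * a) * Real.cosh (t + T) ^ (a - 1)) * Real.sinh (t + T)
        + ((-(a * (a - 1)) * (a - 2)) * Real.cosh (t + T) ^ (a - 3)) * Real.sinh (t + T) := by
    rw [show (3 : ℕ) = 2 + 1 from rfl, iteratedDeriv_succ, h2]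
    have heq : (fun t => a ^ 2 * Real.cosh (t + T) ^ a - a * (a - 1) * Real.cosh (t + T) ^ (a - 2))
        = fun t => a ^ 2 * Real.cosh (t + T) ^ a + (-(a * (a - 1))) * Real.cosh (t + T) ^ (a - 2) := by
      funext t; ring
    rw [heq, deriv_EE]
    funext t
    rw [show a - 2 - 1 = a - 3 from by ring]
    try ring
  rw [show (4 : ℕ) = 3 + 1 from rfl, iteratedDeriv_succ, h3, deriv_OO]
  funext t
  rw [show a - 1 + 1 = a from by ring, show a - 1 - 1 = a - 2 from by ring,
    show a - 3 + 1 = a - 2 from by ring, show a - 3 - 1 = a - 4 from by ring]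
  try ring

/-- The Delaunay ODE for an integer `n ≥ 5`. -/
def DelaunayODE (n : ℕ) (v : ℝ → ℝ) : Prop :=
  ∀ t : ℝ,
    iteratedDeriv 4 v t - (((n : ℝ) * ((n : ℝ) - 4) + 8) / 2) * iteratedDeriv 2 v t
      + ((n : ℝ) ^ 2 * ((n : ℝ) - 4) ^ 2 / 16) * v t
      - ((n : ℝ) * ((n : ℝ) - 4) * ((n : ℝ) ^ 2 - 4) / 16)
          * (v t) ^ (((n : ℝ) + 4) / ((n : ℝ) - 4)) = 0

theorem cosh_solution_delaunay (n : ℕ) (hn : 5 ≤ n) (T : ℝ) :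
    (∀ t : ℝ, 0 < (Real.cosh (t + T)) ^ ((4 - (n : ℝ)) / 2)) ∧
      DelaunayODE n (fun t => (Real.cosh (t + T)) ^ ((4 - (n : ℝ)) / 2)) := by
  refine ⟨fun t => Real.rpow_pos_of_pos (Real.cosh_pos _) _, ?_⟩
  intro t
  set a : ℝ := (4 - (n : ℝ)) / 2 with ha
  obtain ⟨h2, h4⟩ := iteratedDeriv_cosh_rpow a T
  have hn4 : (n : ℝ) - 4 ≠ 0 := by
    have h5 : (5 : ℝ) ≤ (n : ℝ) := by exact_mod_cast hn
    linarith
  have hexp : (Real.cosh (t + T) ^ a) ^ (((n : ℝ) + 4) / ((n : ℝ) - 4))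
      = Real.cosh (t + T) ^ (a - 4) := by
    rw [← Real.rpow_mul (Real.cosh_pos (x := t + T)).le]
    congr 1
    rw [ha]
    field_simp
    ring
  simp only [h2, h4]
  rw [hexp, ha]
  ring
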